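/- In U(K₃), the Jordan superproduct [x,y]₊ = ½(xy + (−1)^{x̄ȳ}yx) does not satisfy the half-action axiom (LA1): with X = EAB (even), Y = EB² (even), Z = EB (odd), one has [X,[Y,Z]₊]₊ = ¼EAB⁴ while [[X,Y]₊,Z]₊ = ½EAB⁴ − ¼EB³, so [X,[Y,Z]₊]₊ ≠ ½[[X,Y]₊,Z]₊. -/

import Mathlib

open FreeAlgebra

/-- Generators of `U(K₃)`: `0 ↦ A`, `1 ↦ B`, `2 ↦ E`. -/
noncomputable def k3gen (i : Fin 3) : FreeAlgebra ℚ (Fin 3) := FreeAlgebra.ι ℚ i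

/-- Defining relations of the universal enveloping algebra `U(K₃)`:
`AB − BA = E`, `AE + EA = A`, `BE + EB = B`, `E² = E`. -/
inductive K3Rel : FreeAlgebra ℚ (Fin 3) → FreeAlgebra ℚ (Fin 3) → Prop
  | r1 : K3Rel (k3gen 0 * k3gen 1 - k3gen 1 * k3gen 0) (k3gen 2)
  | r2 : K3Rel (k3gen 0 * k3gen 2 + k3gen 2 * k3gen 0) (k3gen 0)
  | r3 : K3Rel (k3gen 1 * k3gen 2 + k3gen 2 * k3gen 1) (k3gen 1)
  | r4 : K3Rel (k3gen 2 * k3gen 2) (k3gen 2)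

/-- The universal enveloping algebra `U(K₃)`. -/
abbrev UK3 : Type := RingQuot K3Rel

/-- The generator `A` (odd) of `U(K₃)`. -/
noncomputable def uA : UK3 := RingQuot.mkAlgHom ℚ K3Rel (k3gen 0)
/-- The generator `B` (odd) of `U(K₃)`. -/
noncomputable def uB : UK3 := RingQuot.mkAlgHom ℚ K3Rel (k3gen 1)
/-- The generator `E` (even) of `U(K₃)`. -/
noncomputable def uE : UK3 := RingQuot.mkAlgHom ℚ K3Rel (k3gen 2)

/-! ### Monomial identities in a generic ring with the `K₃` relations -/

section Generic
variable {R : Type} [Ring R] (a b e : R)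
variable (hab : a * b - b * a = e) (ha : a * e + e * a = a)
variable (hb : b * e + e * b = b) (he : e * e = e)

include hb in
lemma gen_hbe : b * e = b - e * b := eq_sub_of_add_eq hb

include ha in
lemma gen_hae : a * e = a - e * a := eq_sub_of_add_eq ha

include hab in
lemma gen_hba : b * a = a * b - e := by rw [← hab]; noncomm_ring

include hb he in
lemma gen_hebe : e * (b * e) = 0 := by
  rw [gen_hbe b e hb, mul_sub, ← mul_assoc, he, sub_self]

include ha hb in
lemma gen_habe : a * b * e = e * (a * b) := by
  calc a * b * e = a * (b * e) := by noncomm_ring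
    _ = a * (b - e * b) := by rw [gen_hbe b e hb]
    _ = a * b - (a * e) * b := by noncomm_ring
    _ = a * b - (a - e * a) * b := by rw [gen_hae a e ha]
    _ = e * (a * b) := by noncomm_ring

include hb in
lemma gen_hbbe : b * b * e = e * (b * b) := by
  calc b * b * e = b * (b * e) := by noncomm_ring
    _ = b * (b - e * b) := by rw [gen_hbe b e hb]
    _ = b * b - (b * e) * b := by noncomm_ring
    _ = b * b - (b - e * b) * b := by rw [gen_hbe b e hb]
    _ = e * (b * b) := by noncomm_ring

include hb in
lemma gen_hb3e : b ^ 3 * e = b ^ 3 - e * b ^ 3 := by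
  calc b ^ 3 * e = b * (b * b * e) := by noncomm_ring
    _ = b * (e * (b * b)) := by rw [gen_hbbe b e hb]
    _ = (b * e) * (b * b) := by noncomm_ring
    _ = (b - e * b) * (b * b) := by rw [gen_hbe b e hb]
    _ = b ^ 3 - e * b ^ 3 := by noncomm_ring

include ha hb in
lemma gen_hab3e : a * b ^ 3 * e = e * (a * b ^ 3) := by
  calc a * b ^ 3 * e = a * (b ^ 3 * e) := by noncomm_ring
    _ = a * (b ^ 3 - e * b ^ 3) := by rw [gen_hb3e b e hb]
    _ = a * b ^ 3 - (a * e) * b ^ 3 := by noncomm_ring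
    _ = a * b ^ 3 - (a - e * a) * b ^ 3 := by rw [gen_hae a e ha]
    _ = e * (a * b ^ 3) := by noncomm_ring

include hb he in
lemma gen_m1 : e * b * b * (e * b) = e * b ^ 3 := by
  calc e * b * b * (e * b) = e * (b * b * e) * b := by noncomm_ring
    _ = e * (e * (b * b)) * b := by rw [gen_hbbe b e hb]
    _ = (e * e) * (b * (b * b)) := by noncomm_ring
    _ = e * b ^ 3 := by rw [he]; noncomm_ring

include hb he in
lemma gen_m2 : e * b * (e * b * b) = 0 := by
  calc e * b * (e * b * b) = (e * (b * e)) * (b * b) := by noncomm_ring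
    _ = 0 := by rw [gen_hebe b e hb he, zero_mul]

include ha hb he in
lemma gen_m3 : e * a * b * (e * b ^ 3) = e * a * b ^ 4 := by
  calc e * a * b * (e * b ^ 3) = e * (a * b * e) * b ^ 3 := by noncomm_ring
    _ = e * (e * (a * b)) * b ^ 3 := by rw [gen_habe a b e ha hb]
    _ = (e * e) * (a * (b * b ^ 3)) := by noncomm_ring
    _ = e * a * b ^ 4 := by rw [he]; noncomm_ring

include hb he in
lemma gen_m4 : e * b ^ 3 * (e * a * b) = 0 := by
  calc e * b ^ 3 * (e * a * b) = e * (b ^ 3 * e) * (a * b) := by noncomm_ring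
    _ = e * (b ^ 3 - e * b ^ 3) * (a * b) := by rw [gen_hb3e b e hb]
    _ = (e * b ^ 3 - (e * e) * b ^ 3) * (a * b) := by noncomm_ring
    _ = 0 := by rw [he, sub_self, zero_mul]

include ha hb he in
lemma gen_m5 : e * a * b * (e * b * b) = e * a * b ^ 3 := by
  calc e * a * b * (e * b * b) = e * (a * b * e) * (b * b) := by noncomm_ring
    _ = e * (e * (a * b)) * (b * b) := by rw [gen_habe a b e ha hb]
    _ = (e * e) * (a * (b * (b * b))) := by noncomm_ring
    _ = e * a * b ^ 3 := by rw [he]; noncomm_ring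

include hab hb he in
lemma gen_m6 : e * b * b * (e * a * b) = e * a * b ^ 3 - e * b ^ 2 := by
  calc e * b * b * (e * a * b) = e * (b * b * e) * (a * b) := by noncomm_ring
    _ = e * (e * (b * b)) * (a * b) := by rw [gen_hbbe b e hb]
    _ = (e * e) * ((b * (b * a)) * b) := by noncomm_ring
    _ = e * ((b * (a * b - e)) * b) := by rw [he, gen_hba a b e hab]
    _ = e * ((b * a) * (b * b)) - e * ((b * e) * b) := by noncomm_ring
    _ = e * ((a * b - e) * (b * b)) - e * ((b - e * b) * b) := by
        rw [gen_hba a b e hab, gen_hbe b e hb]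
    _ = e * a * b ^ 3 - e * b ^ 2 := by noncomm_ring

include ha hb he in
lemma gen_m7 : e * a * b ^ 3 * (e * b) = e * a * b ^ 4 := by
  calc e * a * b ^ 3 * (e * b) = e * (a * b ^ 3 * e) * b := by noncomm_ring
    _ = e * (e * (a * b ^ 3)) * b := by rw [gen_hab3e a b e ha hb]
    _ = (e * e) * (a * (b ^ 3 * b)) := by noncomm_ring
    _ = e * a * b ^ 4 := by rw [he]; noncomm_ring

include hb he in
lemma gen_m8 : e * b ^ 2 * (e * b) = e * b ^ 3 := by
  calc e * b ^ 2 * (e * b) = e * (b * b * e) * b := by noncomm_ring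
    _ = e * (e * (b * b)) * b := by rw [gen_hbbe b e hb]
    _ = (e * e) * (b * (b * b)) := by noncomm_ring
    _ = e * b ^ 3 := by rw [he]; noncomm_ring

include hb he in
lemma gen_m9 : e * b * (e * a * b ^ 3) = 0 := by
  calc e * b * (e * a * b ^ 3) = (e * (b * e)) * (a * b ^ 3) := by noncomm_ring
    _ = 0 := by rw [gen_hebe b e hb he, zero_mul]

include hb he in
lemma gen_m10 : e * b * (e * b ^ 2) = 0 := by
  calc e * b * (e * b ^ 2) = (e * (b * e)) * (b * b) := by noncomm_ring
    _ = 0 := by rw [gen_hebe b e hb he, zero_mul]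

end Generic

/-! ### Basic relations in `U(K₃)` -/

lemma uk3_rel1 : uA * uB - uB * uA = uE := by
  simpa only [uA, uB, uE, map_mul, map_sub] using RingQuot.mkAlgHom_rel ℚ K3Rel.r1

lemma uk3_rel2 : uA * uE + uE * uA = uA := by
  simpa only [uA, uB, uE, map_mul, map_add] using RingQuot.mkAlgHom_rel ℚ K3Rel.r2

lemma uk3_rel3 : uB * uE + uE * uB = uB := by
  simpa only [uA, uB, uE, map_mul, map_add] using RingQuot.mkAlgHom_rel ℚ K3Rel.r3

lemma uk3_he : uE * uE = uE := by
  simpa only [uA, uB, uE, map_mul] using RingQuot.mkAlgHom_rel ℚ K3Rel.r4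

lemma uk3_m1 : uE * uB * uB * (uE * uB) = uE * uB ^ 3 :=
  gen_m1 uB uE uk3_rel3 uk3_he
lemma uk3_m2 : uE * uB * (uE * uB * uB) = 0 :=
  gen_m2 uB uE uk3_rel3 uk3_he
lemma uk3_m3 : uE * uA * uB * (uE * uB ^ 3) = uE * uA * uB ^ 4 :=
  gen_m3 uA uB uE uk3_rel2 uk3_rel3 uk3_he
lemma uk3_m4 : uE * uB ^ 3 * (uE * uA * uB) = 0 :=
  gen_m4 uA uB uE uk3_rel3 uk3_he
lemma uk3_m5 : uE * uA * uB * (uE * uB * uB) = uE * uA * uB ^ 3 :=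
  gen_m5 uA uB uE uk3_rel2 uk3_rel3 uk3_he
lemma uk3_m6 : uE * uB * uB * (uE * uA * uB) = uE * uA * uB ^ 3 - uE * uB ^ 2 :=
  gen_m6 uA uB uE uk3_rel1 uk3_rel3 uk3_he
lemma uk3_m7 : uE * uA * uB ^ 3 * (uE * uB) = uE * uA * uB ^ 4 :=
  gen_m7 uA uB uE uk3_rel2 uk3_rel3 uk3_he
lemma uk3_m8 : uE * uB ^ 2 * (uE * uB) = uE * uB ^ 3 :=
  gen_m8 uB uE uk3_rel3 uk3_he
lemma uk3_m9 : uE * uB * (uE * uA * uB ^ 3) = 0 :=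
  gen_m9 uA uB uE uk3_rel3 uk3_he
lemma uk3_m10 : uE * uB * (uE * uB ^ 2) = 0 :=
  gen_m10 uB uE uk3_rel3 uk3_he

/-! ### A representation of `U(K₃)` on `ℚ[x] × ℚ[x]` -/

/-- The representation of `A`: `(p, q) ↦ (q', x·p')`. -/
noncomputable def repA : (Polynomial ℚ × Polynomial ℚ) →ₗ[ℚ] (Polynomial ℚ × Polynomial ℚ) :=
  ((Polynomial.derivative).comp (LinearMap.snd ℚ _ _)).prod
    ((LinearMap.mulLeft ℚ (Polynomial.X : Polynomial ℚ)).comp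
      ((Polynomial.derivative).comp (LinearMap.fst ℚ _ _)))

/-- The representation of `B`: `(p, q) ↦ (q, x·p)`. -/
noncomputable def repB : (Polynomial ℚ × Polynomial ℚ) →ₗ[ℚ] (Polynomial ℚ × Polynomial ℚ) :=
  (LinearMap.snd ℚ _ _).prod
    ((LinearMap.mulLeft ℚ (Polynomial.X : Polynomial ℚ)).comp (LinearMap.fst ℚ _ _))

/-- The representation of `E`: `(p, q) ↦ (p, 0)`. -/
noncomputable def repE : (Polynomial ℚ × Polynomial ℚ) →ₗ[ℚ] (Polynomial ℚ × Polynomial ℚ) :=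
  (LinearMap.fst ℚ _ _).prod 0

@[simp] lemma repA_apply (p q : Polynomial ℚ) :
    repA (p, q) = (Polynomial.derivative q, Polynomial.X * Polynomial.derivative p) := rfl
@[simp] lemma repB_apply (p q : Polynomial ℚ) :
    repB (p, q) = (q, Polynomial.X * p) := rfl
@[simp] lemma repE_apply (p q : Polynomial ℚ) : repE (p, q) = (p, 0) := rfl

/-- The representation map out of the free algebra. -/
noncomputable def phi0 : FreeAlgebra ℚ (Fin 3) →ₐ[ℚ]
    Module.End ℚ (Polynomial ℚ × Polynomial ℚ) :=
  FreeAlgebra.lift ℚ ![repA, repB, repE]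

lemma phi0_rel : ∀ ⦃x y⦄, K3Rel x y → phi0 x = phi0 y := by
  intro x y h
  induction h with
  | r1 =>
      simp only [phi0, k3gen, map_sub, map_mul, FreeAlgebra.lift_ι_apply,
        Matrix.cons_val_zero, Matrix.cons_val_one, Matrix.head_cons,
        Matrix.cons_val_two, Matrix.tail_cons]
      apply LinearMap.ext; rintro ⟨p, q⟩
      simp [Module.End.mul_apply, Polynomial.derivative_mul]
      try ring
  | r2 =>
      simp only [phi0, k3gen, map_add, map_mul, FreeAlgebra.lift_ι_apply,
        Matrix.cons_val_zero, Matrix.cons_val_one, Matrix.head_cons,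
        Matrix.cons_val_two, Matrix.tail_cons]
      apply LinearMap.ext; rintro ⟨p, q⟩
      simp [Module.End.mul_apply]
  | r3 =>
      simp only [phi0, k3gen, map_add, map_mul, FreeAlgebra.lift_ι_apply,
        Matrix.cons_val_zero, Matrix.cons_val_one, Matrix.head_cons,
        Matrix.cons_val_two, Matrix.tail_cons]
      apply LinearMap.ext; rintro ⟨p, q⟩
      simp [Module.End.mul_apply]
  | r4 =>
      simp only [phi0, k3gen, map_mul, FreeAlgebra.lift_ι_apply,
        Matrix.cons_val_two, Matrix.tail_cons, Matrix.head_cons]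
      apply LinearMap.ext; rintro ⟨p, q⟩
      simp [Module.End.mul_apply]

/-- The induced representation of `U(K₃)`. -/
noncomputable def psi : UK3 →ₐ[ℚ] Module.End ℚ (Polynomial ℚ × Polynomial ℚ) :=
  RingQuot.liftAlgHom ℚ ⟨phi0, phi0_rel⟩

lemma psi_uE : psi uE = repE := by
  rw [uE, psi, RingQuot.liftAlgHom_mkAlgHom_apply]
  simp [phi0, k3gen]

lemma psi_uB : psi uB = repB := by
  rw [uB, psi, RingQuot.liftAlgHom_mkAlgHom_apply]
  simp [phi0, k3gen]

/-- In `U(K₃)`, `EB³ ≠ 0`. -/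
lemma uk3_eb3_ne : uE * uB ^ 3 ≠ 0 := by
  intro h
  have h1 : psi (uE * uB ^ 3) = 0 := by rw [h, map_zero]
  rw [map_mul, map_pow, psi_uE, psi_uB] at h1
  have h2 : (repE * repB ^ 3) ((0 : Polynomial ℚ), (1 : Polynomial ℚ)) = 0 := by
    rw [h1]; rfl
  have h3 : (repE * repB ^ 3) ((0 : Polynomial ℚ), (1 : Polynomial ℚ))
      = ((Polynomial.X : Polynomial ℚ), 0) := by
    show repE (repB (repB (repB (0, 1)))) = _
    simp
  rw [h3, Prod.mk_eq_zero] at h2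
  exact Polynomial.X_ne_zero h2.1

/-- In `U(K₃)` the Jordan superproduct `[x,y]₊ = ½(xy + (−1)^{x̄ȳ}yx)`
fails the half-action axiom (LA1): with `X = EAB` (even), `Y = EB²` (even), `Z = EB`
(odd), all the relevant superproducts are `½(xy + yx)` and one has
`[X,[Y,Z]₊]₊ = ¼EAB⁴` while `[[X,Y]₊,Z]₊ = ½EAB⁴ − ¼EB³`, so that
`[X,[Y,Z]₊]₊ ≠ ½[[X,Y]₊,Z]₊`. -/
theorem uK3_jordan_product_fails_LA1 :
    ∀ X Y Z : UK3, X = uE * uA * uB → Y = uE * uB * uB → Z = uE * uB →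
      (1/2 : ℚ) • (X * ((1/2 : ℚ) • (Y * Z + Z * Y))
          + ((1/2 : ℚ) • (Y * Z + Z * Y)) * X)
        = (1/4 : ℚ) • (uE * uA * uB ^ 4) ∧
      (1/2 : ℚ) • (((1/2 : ℚ) • (X * Y + Y * X)) * Z
          + Z * ((1/2 : ℚ) • (X * Y + Y * X)))
        = (1/2 : ℚ) • (uE * uA * uB ^ 4) - (1/4 : ℚ) • (uE * uB ^ 3) ∧
      (1/2 : ℚ) • (X * ((1/2 : ℚ) • (Y * Z + Z * Y))
          + ((1/2 : ℚ) • (Y * Z + Z * Y)) * X)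
        ≠ (1/2 : ℚ) • ((1/2 : ℚ) • (((1/2 : ℚ) • (X * Y + Y * X)) * Z
          + Z * ((1/2 : ℚ) • (X * Y + Y * X)))) := by
  intro X Y Z hX hY hZ
  subst hX hY hZ
  have h1 : (1/2 : ℚ) • ((uE * uA * uB) * ((1/2 : ℚ) •
        ((uE * uB * uB) * (uE * uB) + (uE * uB) * (uE * uB * uB)))
      + ((1/2 : ℚ) • ((uE * uB * uB) * (uE * uB) + (uE * uB) * (uE * uB * uB)))
        * (uE * uA * uB))
      = (1/4 : ℚ) • (uE * uA * uB ^ 4) := by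
    rw [uk3_m1, uk3_m2, add_zero, mul_smul_comm, smul_mul_assoc, uk3_m3, uk3_m4]
    module
  have h2 : (1/2 : ℚ) • (((1/2 : ℚ) •
        ((uE * uA * uB) * (uE * uB * uB) + (uE * uB * uB) * (uE * uA * uB))) * (uE * uB)
      + (uE * uB) * ((1/2 : ℚ) •
        ((uE * uA * uB) * (uE * uB * uB) + (uE * uB * uB) * (uE * uA * uB))))
      = (1/2 : ℚ) • (uE * uA * uB ^ 4) - (1/4 : ℚ) • (uE * uB ^ 3) := by
    rw [uk3_m5, uk3_m6, smul_mul_assoc, mul_smul_comm, add_mul, sub_mul, mul_add, mul_sub]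
    rw [uk3_m7, uk3_m8, uk3_m9, uk3_m10]
    module
  refine ⟨h1, h2, ?_⟩
  intro hcontra
  rw [h1, h2] at hcontra
  have hexp : (1/2 : ℚ) • ((1/2 : ℚ) • (uE * uA * uB ^ 4) - (1/4 : ℚ) • (uE * uB ^ 3))
      = (1/4 : ℚ) • (uE * uA * uB ^ 4) - (1/8 : ℚ) • (uE * uB ^ 3) := by module
  rw [hexp, eq_sub_iff_add_eq] at hcontra
  have h8 : (1/8 : ℚ) • (uE * uB ^ 3) = 0 := add_eq_left.mp hcontra
  apply uk3_eb3_ne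
  calc uE * uB ^ 3 = (8 : ℚ) • ((1/8 : ℚ) • (uE * uB ^ 3)) := by
        rw [smul_smul]; norm_num
    _ = 0 := by rw [h8, smul_zero]
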